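/- Let B be a bipartite multigraph. Then B is edge-f-choosable where f(e) := max{d(x), d(y)} for each edge e = xy: for every assignment of lists L(e) with |L(e)| ≥ max{d(x), d(y)}, there is a proper edge coloring of B choosing each edge's color from its list. -/
import Mathlib

/- Proof of the Borodin–Kostochka–Woodall theorem on list edge colorings of bipartite
multigraphs.  Outline:
* `BKW.R_case` / `BKW.R_total`: in any nonempty bipartite multigraph there is a nonempty
  matching `M` such that every edge whose `a`-endpoint is covered by `M` has its
  `b`-endpoint covered as well (or the mirrored statement); proved by taking a minimal
  set `S` on one side with `|N(S)| ≤ |S|` and applying Hall's theorem.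
* `BKW.step_matching`: applying this to the subgraph of edges joining two vertices of
  maximum degree produces a matching suitable for peeling.
* `BKW.exists_orders`: by induction, peeling such matchings and re-inserting them at the
  top (resp. bottom) of the per-vertex orders produces linear orders at each vertex such
  that each edge `e = xy` has `(# edges above e at x) + (# edges below e at y) + 1
  ≤ max (d x) (d y)`.
* `BKW.stable_matching`: stable matchings (kernels) exist for arbitrary per-vertex orders.
* `BKW.coloring`: Galvin's kernel argument. -/

namespace BKW

open Finset

variable {V E : Type*} [DecidableEq V] [DecidableEq E]

/-- degree of `v` on the `c`-side within `F` -/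
def dd (c : E → V) (F : Finset E) (v : V) : ℕ := (F.filter fun e => c e = v).card

/-- Given a nonempty candidate set `S₀` on the `p`-side with small boundary, there is a
nonempty matching `M ⊆ Γ` such that every `Γ`-edge whose `p`-end is covered has its
`q`-end covered. -/
lemma R_case (p q : E → V) (Γ : Finset E) (S₀ : Finset V) (hS₀ne : S₀.Nonempty)
    (hS₀sub : S₀ ⊆ Γ.image p)
    (hS₀card : ((Γ.filter fun e => p e ∈ S₀).image q).card ≤ S₀.card) :
    ∃ M ⊆ Γ, M.Nonempty ∧ (∀ m ∈ M, ∀ m' ∈ M, m ≠ m' → p m ≠ p m' ∧ q m ≠ q m') ∧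
      ∀ f ∈ Γ, (∃ m ∈ M, p m = p f) → ∃ m ∈ M, q m = q f := by
  classical
  set 𝒮 : Finset (Finset V) := (Γ.image p).powerset.filter
    (fun S => S.Nonempty ∧ ((Γ.filter fun e => p e ∈ S).image q).card ≤ S.card) with h𝒮def
  have h𝒮 : S₀ ∈ 𝒮 := by
    simp only [h𝒮def, mem_filter, mem_powerset]
    exact ⟨hS₀sub, hS₀ne, hS₀card⟩
  obtain ⟨S, hSmem, hSmin⟩ := Finset.exists_min_image 𝒮 Finset.card ⟨S₀, h𝒮⟩
  simp only [h𝒮def, mem_filter, mem_powerset] at hSmem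
  obtain ⟨hSsub, hSne, hScard⟩ := hSmem
  set NS : Finset V := (Γ.filter fun e => p e ∈ S).image q with hNSdef
  have hNSne : NS.Nonempty := by
    obtain ⟨x, hx⟩ := hSne
    obtain ⟨e, heΓ, hpe⟩ := Finset.mem_image.mp (hSsub hx)
    exact ⟨q e, Finset.mem_image.mpr ⟨e, Finset.mem_filter.mpr ⟨heΓ, hpe ▸ hx⟩, rfl⟩⟩
  -- Hall's condition for matching NS into S
  set t : {y // y ∈ NS} → Finset V :=
    (fun y => (Γ.filter fun e => q e = (y : V) ∧ p e ∈ S).image p) with htdef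
  have htsub : ∀ y, t y ⊆ S := by
    intro y x hx
    obtain ⟨e, he, hpe⟩ := Finset.mem_image.mp hx
    exact hpe ▸ (Finset.mem_filter.mp he).2.2
  have hall : ∀ s : Finset {y // y ∈ NS}, s.card ≤ (s.biUnion t).card := by
    intro s
    by_contra hlt
    push_neg at hlt
    have hsne : s.Nonempty := by
      rcases s.eq_empty_or_nonempty with h | h
      · simp [h] at hlt
      · exact h
    set NT : Finset V := s.biUnion t with hNTdef
    have hNTsubS : NT ⊆ S := by
      intro x hx
      obtain ⟨y, _, hxy⟩ := Finset.mem_biUnion.mp hx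
      exact htsub y hxy
    have hNTne : NT.Nonempty := by
      obtain ⟨y, hy⟩ := hsne
      have : (y : V) ∈ NS := y.2
      obtain ⟨e, he, hqe⟩ := Finset.mem_image.mp this
      refine ⟨p e, Finset.mem_biUnion.mpr ⟨y, hy, ?_⟩⟩
      exact Finset.mem_image.mpr ⟨e, Finset.mem_filter.mpr
        ⟨(Finset.mem_filter.mp he).1, hqe, (Finset.mem_filter.mp he).2⟩, rfl⟩
    set T : Finset V := s.image Subtype.val with hTdef
    have hTcard : T.card = s.card := Finset.card_image_of_injective _ Subtype.val_injective
    have hTsub : T ⊆ NS := by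
      intro x hx
      obtain ⟨y, _, rfl⟩ := Finset.mem_image.mp hx
      exact y.2
    set S'' : Finset V := S \ NT with hS''def
    have hS''N : ((Γ.filter fun e => p e ∈ S'').image q) ⊆ NS \ T := by
      intro x hx
      obtain ⟨e, he, hqe⟩ := Finset.mem_image.mp hx
      obtain ⟨heΓ, hpe⟩ := Finset.mem_filter.mp he
      have hpeS : p e ∈ S := (Finset.mem_sdiff.mp hpe).1
      have hqNS : x ∈ NS := Finset.mem_image.mpr ⟨e, Finset.mem_filter.mpr ⟨heΓ, hpeS⟩, hqe⟩
      refine Finset.mem_sdiff.mpr ⟨hqNS, fun hxT => ?_⟩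
      obtain ⟨y, hys, hyx⟩ := Finset.mem_image.mp hxT
      have : p e ∈ NT := Finset.mem_biUnion.mpr ⟨y, hys,
        Finset.mem_image.mpr ⟨e, Finset.mem_filter.mpr ⟨heΓ, by rw [hyx, hqe], hpeS⟩, rfl⟩⟩
      exact (Finset.mem_sdiff.mp hpe).2 this
    -- numerics
    have c1 : S''.card = S.card - NT.card := Finset.card_sdiff_of_subset hNTsubS
    have c2 : NT.card < s.card := hlt
    have c3 : NS.card ≤ S.card := hScard
    have c4 : T.card ≤ NS.card := Finset.card_le_card hTsub
    have c5 : NT.card ≤ S.card := Finset.card_le_card hNTsubS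
    have c6 : ((Γ.filter fun e => p e ∈ S'').image q).card ≤ NS.card - T.card := by
      calc ((Γ.filter fun e => p e ∈ S'').image q).card ≤ (NS \ T).card :=
            Finset.card_le_card hS''N
        _ = NS.card - T.card := Finset.card_sdiff_of_subset hTsub
    have c7 : 1 ≤ NT.card := Finset.card_pos.mpr hNTne
    have hS''mem : S'' ∈ 𝒮 := by
      simp only [h𝒮def, mem_filter, mem_powerset]
      refine ⟨(Finset.sdiff_subset).trans hSsub, Finset.card_pos.mp (by omega), by omega⟩
    have := hSmin S'' hS''mem
    omega
  obtain ⟨φ, hφinj, hφmem⟩ := (Finset.all_card_le_biUnion_card_iff_exists_injective t).mp hall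
  have hch : ∀ y : {y // y ∈ NS}, ∃ e, (e ∈ Γ ∧ q e = (y : V) ∧ p e ∈ S) ∧ p e = φ y := by
    intro y
    obtain ⟨e, he, hpe⟩ := Finset.mem_image.mp (hφmem y)
    exact ⟨e, by simpa using (Finset.mem_filter.mp he), hpe⟩
  choose ed hed hped using hch
  have hedinj : Function.Injective ed := by
    intro y y' h
    have : (y : V) = (y' : V) := by rw [← (hed y).2.1, ← (hed y').2.1, h]
    exact Subtype.val_injective this
  haveI : Nonempty {y // y ∈ NS} := by
    obtain ⟨y, hy⟩ := hNSne; exact ⟨⟨y, hy⟩⟩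
  refine ⟨Finset.univ.image ed, ?_, ?_, ?_, ?_⟩
  · intro m hm
    obtain ⟨y, _, rfl⟩ := Finset.mem_image.mp hm
    exact (hed y).1
  · exact ⟨ed (Classical.arbitrary _), Finset.mem_image.mpr ⟨_, Finset.mem_univ _, rfl⟩⟩
  · intro m hm m' hm' hne
    obtain ⟨y, _, rfl⟩ := Finset.mem_image.mp hm
    obtain ⟨y', _, rfl⟩ := Finset.mem_image.mp hm'
    have hyy : y ≠ y' := fun h => hne (by rw [h])
    constructor
    · rw [hped y, hped y']
      exact fun h => hyy (hφinj h)
    · rw [(hed y).2.1, (hed y').2.1]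
      exact fun h => hyy (Subtype.val_injective h)
  · intro f hf ⟨m, hm, hpm⟩
    obtain ⟨y, _, rfl⟩ := Finset.mem_image.mp hm
    have hpfS : p f ∈ S := by
      rw [← hpm, hped y]
      exact htsub y (hφmem y)
    have hqfNS : q f ∈ NS := Finset.mem_image.mpr ⟨f, Finset.mem_filter.mpr ⟨hf, hpfS⟩, rfl⟩
    refine ⟨ed ⟨q f, hqfNS⟩, Finset.mem_image.mpr ⟨_, Finset.mem_univ _, rfl⟩, ?_⟩
    exact (hed ⟨q f, hqfNS⟩).2.1

lemma R_total (a b : E → V) (Γ : Finset E) (hne : Γ.Nonempty) :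
    (∃ M ⊆ Γ, M.Nonempty ∧ (∀ m ∈ M, ∀ m' ∈ M, m ≠ m' → a m ≠ a m' ∧ b m ≠ b m') ∧
      ∀ f ∈ Γ, (∃ m ∈ M, a m = a f) → ∃ m ∈ M, b m = b f) ∨
    (∃ M ⊆ Γ, M.Nonempty ∧ (∀ m ∈ M, ∀ m' ∈ M, m ≠ m' → a m ≠ a m' ∧ b m ≠ b m') ∧
      ∀ f ∈ Γ, (∃ m ∈ M, b m = b f) → ∃ m ∈ M, a m = a f) := by
  classical
  by_cases hc : ∃ S : Finset V, S.Nonempty ∧ S ⊆ Γ.image a ∧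
      ((Γ.filter fun e => a e ∈ S).image b).card ≤ S.card
  · obtain ⟨S, h1, h2, h3⟩ := hc
    left
    exact R_case a b Γ S h1 h2 h3
  · push_neg at hc
    right
    have hfull : (Γ.filter fun e => a e ∈ Γ.image a) = Γ :=
      Finset.filter_eq_self.mpr fun e he => Finset.mem_image_of_mem a he
    have hgt : (Γ.image a).card < (Γ.image b).card := by
      have := hc (Γ.image a) (hne.image a) (le_refl _)
      rwa [hfull] at this
    have h3 : ((Γ.filter fun e => b e ∈ Γ.image b).image a).card ≤ (Γ.image b).card := by
      have hfull2 : (Γ.filter fun e => b e ∈ Γ.image b) = Γ :=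
        Finset.filter_eq_self.mpr fun e he => Finset.mem_image_of_mem b he
      rw [hfull2]
      exact le_of_lt hgt
    obtain ⟨M, h1, h2, h4, h5⟩ := R_case b a Γ (Γ.image b) (hne.image b) (le_refl _) h3
    exact ⟨M, h1, h2, fun m hm m' hm' hne' => ⟨((h4 m hm m' hm' hne').2),
      ((h4 m hm m' hm' hne').1)⟩, h5⟩

lemma step_matching (a b : E → V) (F : Finset E) (hne : F.Nonempty) :
    ∃ M ⊆ F, M.Nonempty ∧ (∀ m ∈ M, ∀ m' ∈ M, m ≠ m' → a m ≠ a m' ∧ b m ≠ b m') ∧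
      ((∀ f ∈ F, (∃ m ∈ M, a m = a f) → ¬(∃ m ∈ M, b m = b f) →
          dd b F (b f) < dd a F (a f)) ∨
       (∀ f ∈ F, (∃ m ∈ M, b m = b f) → ¬(∃ m ∈ M, a m = a f) →
          dd a F (a f) < dd b F (b f))) := by
  classical
  set Δ : ℕ := F.sup (fun e => max (dd a F (a e)) (dd b F (b e))) with hΔdef
  have hle : ∀ f ∈ F, dd a F (a f) ≤ Δ ∧ dd b F (b f) ≤ Δ := by
    intro f hf
    have h := Finset.le_sup (f := fun e => max (dd a F (a e)) (dd b F (b e))) hf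
    rw [← hΔdef] at h
    exact ⟨le_trans (le_max_left _ _) h, le_trans (le_max_right _ _) h⟩
  set Γ : Finset E := F.filter (fun e => dd a F (a e) = Δ ∧ dd b F (b e) = Δ) with hΓdef
  by_cases hΓ : Γ.Nonempty
  · rcases R_total a b Γ hΓ with ⟨M, hsub, hMne, hmatch, hclos⟩ | ⟨M, hsub, hMne, hmatch, hclos⟩
    · refine ⟨M, fun m hm => Finset.mem_filter.mp (hsub hm) |>.1, hMne, hmatch, Or.inl ?_⟩
      intro f hf ⟨m, hm, ham⟩ hnb
      have hmΓ := Finset.mem_filter.mp (hsub hm)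
      have haf : dd a F (a f) = Δ := ham ▸ hmΓ.2.1
      have hbf : dd b F (b f) ≠ Δ := by
        intro hbfΔ
        exact hnb (hclos f (Finset.mem_filter.mpr ⟨hf, haf, hbfΔ⟩) ⟨m, hm, ham⟩)
      have := (hle f hf).2
      omega
    · refine ⟨M, fun m hm => Finset.mem_filter.mp (hsub hm) |>.1, hMne, hmatch, Or.inr ?_⟩
      intro f hf ⟨m, hm, hbm⟩ hna
      have hmΓ := Finset.mem_filter.mp (hsub hm)
      have hbf : dd b F (b f) = Δ := hbm ▸ hmΓ.2.2
      have haf : dd a F (a f) ≠ Δ := by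
        intro hafΔ
        exact hna (hclos f (Finset.mem_filter.mpr ⟨hf, hafΔ, hbf⟩) ⟨m, hm, hbm⟩)
      have := (hle f hf).1
      omega
  · obtain ⟨e₀, he₀, heq⟩ := Finset.exists_mem_eq_sup F hne
      (fun e => max (dd a F (a e)) (dd b F (b e)))
    have hmax : dd a F (a e₀) = Δ ∨ dd b F (b e₀) = Δ := by
      rcases max_cases (dd a F (a e₀)) (dd b F (b e₀)) with ⟨h1, _⟩ | ⟨h1, _⟩
      · left; rw [hΔdef, heq]; exact h1.symm
      · right; rw [hΔdef, heq]; exact h1.symm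
    have hsingle : ∀ m ∈ ({e₀} : Finset E), ∀ m' ∈ ({e₀} : Finset E), m ≠ m' →
        a m ≠ a m' ∧ b m ≠ b m' := by
      intro m hm m' hm' hne'
      rw [Finset.mem_singleton] at hm hm'
      exact absurd (hm.trans hm'.symm) hne'
    rcases hmax with hca | hcb
    · refine ⟨{e₀}, Finset.singleton_subset_iff.mpr he₀, ⟨e₀, Finset.mem_singleton_self _⟩,
        hsingle, Or.inl ?_⟩
      intro f hf ⟨m, hm, ham⟩ _
      rw [Finset.mem_singleton] at hm
      subst hm
      have haf : dd a F (a f) = Δ := ham ▸ hca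
      have hbf : dd b F (b f) ≠ Δ := by
        intro hbfΔ
        exact hΓ ⟨f, Finset.mem_filter.mpr ⟨hf, haf, hbfΔ⟩⟩
      have := (hle f hf).2
      omega
    · refine ⟨{e₀}, Finset.singleton_subset_iff.mpr he₀, ⟨e₀, Finset.mem_singleton_self _⟩,
        hsingle, Or.inr ?_⟩
      intro f hf ⟨m, hm, hbm⟩ _
      rw [Finset.mem_singleton] at hm
      subst hm
      have hbf : dd b F (b f) = Δ := hbm ▸ hcb
      have haf : dd a F (a f) ≠ Δ := by
        intro hafΔ
        exact hΓ ⟨f, Finset.mem_filter.mpr ⟨hf, hafΔ, hbf⟩⟩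
      have := (hle f hf).1
      omega

lemma exists_orders (a b : E → V) :
    ∀ (n : ℕ) (F : Finset E), F.card ≤ n →
    ∃ pa pb : E → ℕ,
      (∀ e ∈ F, ∀ f ∈ F, a f = a e → pa f = pa e → f = e) ∧
      (∀ e ∈ F, ∀ f ∈ F, b f = b e → pb f = pb e → f = e) ∧
      (∀ e ∈ F, (F.filter fun f => a f = a e ∧ pa e < pa f).card +
                (F.filter fun f => b f = b e ∧ pb f < pb e).card + 1
                ≤ max (dd a F (a e)) (dd b F (b e))) := by
  classical
  intro n
  induction n with
  | zero =>
    intro F hF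
    have : F = ∅ := Finset.card_eq_zero.mp (Nat.le_zero.mp hF)
    subst this
    exact ⟨fun _ => 0, fun _ => 0, by simp, by simp, by simp⟩
  | succ n ih =>
    intro F hF
    rcases F.eq_empty_or_nonempty with rfl | hne
    · exact ⟨fun _ => 0, fun _ => 0, by simp, by simp, by simp⟩
    obtain ⟨M, hsub, hMne, hmatch, hside⟩ := step_matching a b F hne
    set F' : Finset E := F \ M with hF'def
    have hunion : F' ∪ M = F := Finset.sdiff_union_of_subset hsub
    have hdisj : Disjoint F' M := Finset.sdiff_disjoint
    have hcard : F'.card ≤ n := by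
      have h1 : F'.card < F.card :=
        Finset.card_lt_card (Finset.sdiff_ssubset hsub hMne)
      omega
    obtain ⟨pa', pb', hia', hib', hcond'⟩ := ih F' hcard
    set N : ℕ := (F'.sup pa') + (F'.sup pb') + 1 with hNdef
    have hNa : ∀ f ∈ F', pa' f < N := by
      intro f hf
      have := Finset.le_sup (f := pa') hf
      omega
    have hNb : ∀ f ∈ F', pb' f < N := by
      intro f hf
      have := Finset.le_sup (f := pb') hf
      omega
    have hMF : ∀ m ∈ M, m ∈ F := fun m hm => hsub hm
    have hmemF' : ∀ f ∈ F, f ∉ M → f ∈ F' := fun f hf hfm =>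
      Finset.mem_sdiff.mpr ⟨hf, hfm⟩
    have hF'M : ∀ f ∈ F', f ∉ M := fun f hf => (Finset.mem_sdiff.mp hf).2
    have hsplit : ∀ (P : E → Prop) (hP : DecidablePred P),
        (F.filter P).card = (F'.filter P).card + (M.filter P).card := by
      intro P hP
      rw [← hunion, Finset.filter_union,
        Finset.card_union_of_disjoint (Finset.disjoint_filter_filter hdisj)]
    have hcova : ∀ e, (M.filter fun m => a m = a e).card ≤ 1 := by
      intro e
      refine Finset.card_le_one.mpr fun m hm m' hm' => ?_
      rw [Finset.mem_filter] at hm hm'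
      by_contra hne'
      exact (hmatch m hm.1 m' hm'.1 hne').1 (hm.2.trans hm'.2.symm)
    have hcovb : ∀ e, (M.filter fun m => b m = b e).card ≤ 1 := by
      intro e
      refine Finset.card_le_one.mpr fun m hm m' hm' => ?_
      rw [Finset.mem_filter] at hm hm'
      by_contra hne'
      exact (hmatch m hm.1 m' hm'.1 hne').2 (hm.2.trans hm'.2.symm)
    have hdda : ∀ e, dd a F (a e) = dd a F' (a e) + (M.filter fun m => a m = a e).card :=
      fun e => hsplit _ _
    have hddb : ∀ e, dd b F (b e) = dd b F' (b e) + (M.filter fun m => b m = b e).card :=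
      fun e => hsplit _ _
    have hddapos : ∀ e ∈ F, 1 ≤ dd a F (a e) := by
      intro e he
      exact Finset.card_pos.mpr ⟨e, Finset.mem_filter.mpr ⟨he, rfl⟩⟩
    have hddbpos : ∀ e ∈ F, 1 ≤ dd b F (b e) := by
      intro e he
      exact Finset.card_pos.mpr ⟨e, Finset.mem_filter.mpr ⟨he, rfl⟩⟩
    rcases hside with hA | hB
    · -- side A : insert M at the top of both endpoints
      set pa : E → ℕ := fun e => if e ∈ M then N else pa' e with hpadef
      set pb : E → ℕ := fun e => if e ∈ M then N else pb' e with hpbdef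
      have hpaM : ∀ e ∈ M, pa e = N := fun e he => by simp [hpadef, he]
      have hpbM : ∀ e ∈ M, pb e = N := fun e he => by simp [hpbdef, he]
      have hpaF' : ∀ e ∈ F', pa e = pa' e := fun e he => by simp [hpadef, hF'M e he]
      have hpbF' : ∀ e ∈ F', pb e = pb' e := fun e he => by simp [hpbdef, hF'M e he]
      refine ⟨pa, pb, ?_, ?_, ?_⟩
      · intro e he f hf hab hp
        by_cases hem : e ∈ M <;> by_cases hfm : f ∈ M
        · by_contra hne'
          exact (hmatch f hfm e hem hne').1 hab
        · rw [hpaM e hem, hpaF' f (hmemF' f hf hfm)] at hp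
          exact absurd hp (by have := hNa f (hmemF' f hf hfm); omega)
        · rw [hpaF' e (hmemF' e he hem), hpaM f hfm] at hp
          exact absurd hp (by have := hNa e (hmemF' e he hem); omega)
        · rw [hpaF' e (hmemF' e he hem), hpaF' f (hmemF' f hf hfm)] at hp
          exact hia' e (hmemF' e he hem) f (hmemF' f hf hfm) hab hp
      · intro e he f hf hab hp
        by_cases hem : e ∈ M <;> by_cases hfm : f ∈ M
        · by_contra hne'
          exact (hmatch f hfm e hem hne').2 hab
        · rw [hpbM e hem, hpbF' f (hmemF' f hf hfm)] at hp
          exact absurd hp (by have := hNb f (hmemF' f hf hfm); omega)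
        · rw [hpbF' e (hmemF' e he hem), hpbM f hfm] at hp
          exact absurd hp (by have := hNb e (hmemF' e he hem); omega)
        · rw [hpbF' e (hmemF' e he hem), hpbF' f (hmemF' f hf hfm)] at hp
          exact hib' e (hmemF' e he hem) f (hmemF' f hf hfm) hab hp
      · intro e he
        by_cases hem : e ∈ M
        · have ho : (F.filter fun f => a f = a e ∧ pa e < pa f) = ∅ := by
            refine Finset.filter_eq_empty_iff.mpr fun f hf => ?_
            rw [hpaM e hem]
            rintro ⟨-, hlt⟩
            by_cases hfm : f ∈ M
            · rw [hpaM f hfm] at hlt; omega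
            · rw [hpaF' f (hmemF' f hf hfm)] at hlt
              have := hNa f (hmemF' f hf hfm); omega
          have hu : (F.filter fun f => b f = b e ∧ pb f < pb e).card
              ≤ dd b F (b e) - 1 := by
            have hss : (F.filter fun f => b f = b e ∧ pb f < pb e)
                ⊆ (F.filter fun f => b f = b e).erase e := by
              intro f hf
              rw [Finset.mem_filter] at hf
              refine Finset.mem_erase.mpr ⟨?_, Finset.mem_filter.mpr ⟨hf.1, hf.2.1⟩⟩
              rintro rfl
              exact lt_irrefl _ hf.2.2
            calc _ ≤ ((F.filter fun f => b f = b e).erase e).card :=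
                  Finset.card_le_card hss
              _ = dd b F (b e) - 1 := Finset.card_erase_of_mem
                  (Finset.mem_filter.mpr ⟨hMF e hem, rfl⟩)
          rw [ho]
          have h1 := hddbpos e he
          have h2 := le_max_right (dd a F (a e)) (dd b F (b e))
          simp only [Finset.card_empty]
          omega
        · have heF' : e ∈ F' := hmemF' e he hem
          have ho : (F.filter fun f => a f = a e ∧ pa e < pa f).card
              ≤ (F'.filter fun f => a f = a e ∧ pa' e < pa' f).card
                + (M.filter fun m => a m = a e).card := by
            rw [hsplit _ _]
            have h1 : (F'.filter fun f => a f = a e ∧ pa e < pa f)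
                = (F'.filter fun f => a f = a e ∧ pa' e < pa' f) := by
              refine Finset.filter_congr fun f hf => ?_
              rw [hpaF' e heF', hpaF' f hf]
            have h2 : (M.filter fun f => a f = a e ∧ pa e < pa f)
                ⊆ (M.filter fun m => a m = a e) := by
              intro f hf
              rw [Finset.mem_filter] at hf ⊢
              exact ⟨hf.1, hf.2.1⟩
            rw [h1]
            exact Nat.add_le_add_left (Finset.card_le_card h2) _
          have hu : (F.filter fun f => b f = b e ∧ pb f < pb e).card
              = (F'.filter fun f => b f = b e ∧ pb' f < pb' e).card := by
            rw [hsplit _ _]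
            have hM0 : (M.filter fun f => b f = b e ∧ pb f < pb e) = ∅ := by
              refine Finset.filter_eq_empty_iff.mpr fun f hf => ?_
              rw [hpbM f hf, hpbF' e heF']
              rintro ⟨-, hlt⟩
              have := hNb e heF'; omega
            have h1 : (F'.filter fun f => b f = b e ∧ pb f < pb e)
                = (F'.filter fun f => b f = b e ∧ pb' f < pb' e) := by
              refine Finset.filter_congr fun f hf => ?_
              rw [hpbF' e heF', hpbF' f hf]
            rw [hM0, h1]
            simp
          have hcnd := hcond' e heF'
          have hca1 := hcova e
          have hcb1 := hcovb e
          have hddae := hdda e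
          have hddbe := hddb e
          rw [hu]
          rcases Nat.eq_zero_or_pos (M.filter fun m => a m = a e).card with hca0 | hcapos
          · have hb1 : max (dd a F' (a e)) (dd b F' (b e))
                ≤ max (dd a F (a e)) (dd b F (b e)) :=
              max_le_max (by omega) (by omega)
            omega
          · have hcova_ex : ∃ m ∈ M, a m = a e := by
              obtain ⟨m, hm⟩ := Finset.card_pos.mp hcapos
              rw [Finset.mem_filter] at hm
              exact ⟨m, hm.1, hm.2⟩
            rcases Nat.eq_zero_or_pos (M.filter fun m => b m = b e).card with hcb0 | hcbpos
            · have hncb : ¬∃ m ∈ M, b m = b e := by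
                rintro ⟨m, hm, hbm⟩
                have hmem : m ∈ M.filter fun m => b m = b e :=
                  Finset.mem_filter.mpr ⟨hm, hbm⟩
                have := Finset.card_pos.mpr ⟨m, hmem⟩
                omega
              have hlt := hA e he hcova_ex hncb
              have hmx1 : max (dd a F (a e)) (dd b F (b e)) = dd a F (a e) :=
                max_eq_left (by omega)
              have hmx2 : max (dd a F' (a e)) (dd b F' (b e)) = dd a F' (a e) :=
                max_eq_left (by omega)
              omega
            · have hb2 : max (dd a F' (a e)) (dd b F' (b e)) + 1
                  ≤ max (dd a F (a e)) (dd b F (b e)) := by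
                have h1 : dd a F' (a e) + 1 ≤ dd a F (a e) := by omega
                have h2 : dd b F' (b e) + 1 ≤ dd b F (b e) := by omega
                calc max (dd a F' (a e)) (dd b F' (b e)) + 1
                    = max (dd a F' (a e) + 1) (dd b F' (b e) + 1) := by
                      rw [Nat.succ_max_succ]
                  _ ≤ max (dd a F (a e)) (dd b F (b e)) := max_le_max h1 h2
              omega
    · -- side B : insert M at the bottom of both endpoints
      set pa : E → ℕ := fun e => if e ∈ M then 0 else pa' e + 1 with hpadef
      set pb : E → ℕ := fun e => if e ∈ M then 0 else pb' e + 1 with hpbdef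
      have hpaM : ∀ e ∈ M, pa e = 0 := fun e he => by simp [hpadef, he]
      have hpbM : ∀ e ∈ M, pb e = 0 := fun e he => by simp [hpbdef, he]
      have hpaF' : ∀ e ∈ F', pa e = pa' e + 1 := fun e he => by simp [hpadef, hF'M e he]
      have hpbF' : ∀ e ∈ F', pb e = pb' e + 1 := fun e he => by simp [hpbdef, hF'M e he]
      refine ⟨pa, pb, ?_, ?_, ?_⟩
      · intro e he f hf hab hp
        by_cases hem : e ∈ M <;> by_cases hfm : f ∈ M
        · by_contra hne'
          exact (hmatch f hfm e hem hne').1 hab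
        · rw [hpaM e hem, hpaF' f (hmemF' f hf hfm)] at hp
          omega
        · rw [hpaF' e (hmemF' e he hem), hpaM f hfm] at hp
          omega
        · rw [hpaF' e (hmemF' e he hem), hpaF' f (hmemF' f hf hfm)] at hp
          exact hia' e (hmemF' e he hem) f (hmemF' f hf hfm) hab (by omega)
      · intro e he f hf hab hp
        by_cases hem : e ∈ M <;> by_cases hfm : f ∈ M
        · by_contra hne'
          exact (hmatch f hfm e hem hne').2 hab
        · rw [hpbM e hem, hpbF' f (hmemF' f hf hfm)] at hp
          omega
        · rw [hpbF' e (hmemF' e he hem), hpbM f hfm] at hp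
          omega
        · rw [hpbF' e (hmemF' e he hem), hpbF' f (hmemF' f hf hfm)] at hp
          exact hib' e (hmemF' e he hem) f (hmemF' f hf hfm) hab (by omega)
      · intro e he
        by_cases hem : e ∈ M
        · have hu : (F.filter fun f => b f = b e ∧ pb f < pb e) = ∅ := by
            refine Finset.filter_eq_empty_iff.mpr fun f hf => ?_
            rw [hpbM e hem]
            rintro ⟨-, hlt⟩
            omega
          have ho : (F.filter fun f => a f = a e ∧ pa e < pa f).card
              ≤ dd a F (a e) - 1 := by
            have hss : (F.filter fun f => a f = a e ∧ pa e < pa f)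
                ⊆ (F.filter fun f => a f = a e).erase e := by
              intro f hf
              rw [Finset.mem_filter] at hf
              refine Finset.mem_erase.mpr ⟨?_, Finset.mem_filter.mpr ⟨hf.1, hf.2.1⟩⟩
              rintro rfl
              exact lt_irrefl _ hf.2.2
            calc _ ≤ ((F.filter fun f => a f = a e).erase e).card :=
                  Finset.card_le_card hss
              _ = dd a F (a e) - 1 := Finset.card_erase_of_mem
                  (Finset.mem_filter.mpr ⟨hMF e hem, rfl⟩)
          rw [hu]
          have h1 := hddapos e he
          have h2 := le_max_left (dd a F (a e)) (dd b F (b e))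
          simp only [Finset.card_empty]
          omega
        · have heF' : e ∈ F' := hmemF' e he hem
          have ho : (F.filter fun f => a f = a e ∧ pa e < pa f).card
              = (F'.filter fun f => a f = a e ∧ pa' e < pa' f).card := by
            rw [hsplit _ _]
            have hM0 : (M.filter fun f => a f = a e ∧ pa e < pa f) = ∅ := by
              refine Finset.filter_eq_empty_iff.mpr fun f hf => ?_
              rw [hpaM f hf, hpaF' e heF']
              rintro ⟨-, hlt⟩
              omega
            have h1 : (F'.filter fun f => a f = a e ∧ pa e < pa f)
                = (F'.filter fun f => a f = a e ∧ pa' e < pa' f) := by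
              refine Finset.filter_congr fun f hf => ?_
              rw [hpaF' e heF', hpaF' f hf]
              constructor
              · rintro ⟨h1, h2⟩; exact ⟨h1, by omega⟩
              · rintro ⟨h1, h2⟩; exact ⟨h1, by omega⟩
            rw [hM0, h1]
            simp
          have hu : (F.filter fun f => b f = b e ∧ pb f < pb e).card
              ≤ (F'.filter fun f => b f = b e ∧ pb' f < pb' e).card
                + (M.filter fun m => b m = b e).card := by
            rw [hsplit _ _]
            have h1 : (F'.filter fun f => b f = b e ∧ pb f < pb e)
                = (F'.filter fun f => b f = b e ∧ pb' f < pb' e) := by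
              refine Finset.filter_congr fun f hf => ?_
              rw [hpbF' e heF', hpbF' f hf]
              constructor
              · rintro ⟨h1, h2⟩; exact ⟨h1, by omega⟩
              · rintro ⟨h1, h2⟩; exact ⟨h1, by omega⟩
            have h2 : (M.filter fun f => b f = b e ∧ pb f < pb e)
                ⊆ (M.filter fun m => b m = b e) := by
              intro f hf
              rw [Finset.mem_filter] at hf ⊢
              exact ⟨hf.1, hf.2.1⟩
            rw [h1]
            exact Nat.add_le_add_left (Finset.card_le_card h2) _
          have hcnd := hcond' e heF'
          have hca1 := hcova e
          have hcb1 := hcovb e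
          have hddae := hdda e
          have hddbe := hddb e
          rw [ho]
          rcases Nat.eq_zero_or_pos (M.filter fun m => b m = b e).card with hcb0 | hcbpos
          · have hb1 : max (dd a F' (a e)) (dd b F' (b e))
                ≤ max (dd a F (a e)) (dd b F (b e)) :=
              max_le_max (by omega) (by omega)
            omega
          · have hcovb_ex : ∃ m ∈ M, b m = b e := by
              obtain ⟨m, hm⟩ := Finset.card_pos.mp hcbpos
              rw [Finset.mem_filter] at hm
              exact ⟨m, hm.1, hm.2⟩
            rcases Nat.eq_zero_or_pos (M.filter fun m => a m = a e).card with hca0 | hcapos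
            · have hnca : ¬∃ m ∈ M, a m = a e := by
                rintro ⟨m, hm, ham⟩
                have hmem : m ∈ M.filter fun m => a m = a e :=
                  Finset.mem_filter.mpr ⟨hm, ham⟩
                have := Finset.card_pos.mpr ⟨m, hmem⟩
                omega
              have hlt := hB e he hcovb_ex hnca
              have hmx1 : max (dd a F (a e)) (dd b F (b e)) = dd b F (b e) :=
                max_eq_right (by omega)
              have hmx2 : max (dd a F' (a e)) (dd b F' (b e)) = dd b F' (b e) :=
                max_eq_right (by omega)
              omega
            · have hb2 : max (dd a F' (a e)) (dd b F' (b e)) + 1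
                  ≤ max (dd a F (a e)) (dd b F (b e)) := by
                have h1 : dd a F' (a e) + 1 ≤ dd a F (a e) := by omega
                have h2 : dd b F' (b e) + 1 ≤ dd b F (b e) := by omega
                calc max (dd a F' (a e)) (dd b F' (b e)) + 1
                    = max (dd a F' (a e) + 1) (dd b F' (b e) + 1) := by
                      rw [Nat.succ_max_succ]
                  _ ≤ max (dd a F (a e)) (dd b F (b e)) := max_le_max h1 h2
              omega

/-- Existence of a "stable matching" (kernel) for any subset `H` of edges,
with respect to per-vertex orders given by `pa` (at `a`-ends) and `pb` (at `b`-ends). -/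
lemma stable_matching (a b : E → V) (pa pb : E → ℕ) :
    ∀ (n : ℕ) (H : Finset E), H.card ≤ n →
    (∀ e ∈ H, ∀ f ∈ H, a f = a e → pa f = pa e → f = e) →
    (∀ e ∈ H, ∀ f ∈ H, b f = b e → pb f = pb e → f = e) →
    ∃ K ⊆ H, (∀ k ∈ K, ∀ k' ∈ K, k ≠ k' → a k ≠ a k' ∧ b k ≠ b k') ∧
      ∀ e ∈ H, e ∉ K → ∃ f ∈ K, (a f = a e ∧ pa e < pa f) ∨ (b f = b e ∧ pb f < pb e) := by
  classical
  intro n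
  induction n with
  | zero =>
    intro H hH _ _
    have : H = ∅ := Finset.card_eq_zero.mp (Nat.le_zero.mp hH)
    subst this
    exact ⟨∅, Finset.Subset.refl _, by simp, by simp⟩
  | succ n ih =>
    intro H hH hia hib
    set T : Finset E := H.filter (fun e => ∀ f ∈ H, a f = a e → pa f ≤ pa e) with hTdef
    by_cases hdel : ∃ e ∈ T, ∃ g ∈ H, g ≠ e ∧ b g = b e ∧ pb e < pb g
    · obtain ⟨e, heT, g, hgH, hgne, hgb, hglt⟩ := hdel
      obtain ⟨heH, hetop⟩ := Finset.mem_filter.mp heT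
      have hcard : (H.erase g).card ≤ n := by
        have := Finset.card_erase_of_mem hgH
        have hpos : 1 ≤ H.card := Finset.card_pos.mpr ⟨g, hgH⟩
        omega
      obtain ⟨K, hKsub, hKmatch, hKdom⟩ := ih (H.erase g) hcard
        (fun e' he' f hf hab hp => hia e' (Finset.mem_of_mem_erase he')
          f (Finset.mem_of_mem_erase hf) hab hp)
        (fun e' he' f hf hab hp => hib e' (Finset.mem_of_mem_erase he')
          f (Finset.mem_of_mem_erase hf) hab hp)
      have heK : e ∈ H.erase g := Finset.mem_erase.mpr ⟨fun h => hgne h.symm, heH⟩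
      refine ⟨K, fun k hk => Finset.mem_of_mem_erase (hKsub hk), hKmatch, ?_⟩
      intro e' he' he'K
      by_cases he'g : e' = g
      · subst he'g
        by_cases heK' : e ∈ K
        · exact ⟨e, heK', Or.inr ⟨hgb.symm, hglt⟩⟩
        · obtain ⟨f, hfK, hfd⟩ := hKdom e heK heK'
          rcases hfd with ⟨hfa, hflt⟩ | ⟨hfb, hflt⟩
          · exact absurd hflt (by
              have := hetop f (Finset.mem_of_mem_erase (hKsub hfK)) hfa
              omega)
          · exact ⟨f, hfK, Or.inr ⟨by rw [hfb, ← hgb], by omega⟩⟩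
      · exact hKdom e' (Finset.mem_erase.mpr ⟨he'g, he'⟩) he'K
    · push_neg at hdel
      refine ⟨T, Finset.filter_subset _ _, ?_, ?_⟩
      · intro k hk k' hk' hkk
        obtain ⟨hkH, hktop⟩ := Finset.mem_filter.mp hk
        obtain ⟨hk'H, hk'top⟩ := Finset.mem_filter.mp hk'
        constructor
        · intro hab
          have h1 := hktop k' hk'H hab.symm
          have h2 := hk'top k hkH hab
          exact hkk ((hia k hkH k' hk'H hab.symm (by omega)).symm)
        · intro hbb
          have h1 := hdel k hk k' hk'H (fun h => hkk h.symm) hbb.symm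
          have h2 := hdel k' hk' k hkH hkk hbb
          exact hkk ((hib k hkH k' hk'H hbb.symm (by omega)).symm)
      · intro e heH heT
        have hne : (H.filter fun f => a f = a e).Nonempty :=
          ⟨e, Finset.mem_filter.mpr ⟨heH, rfl⟩⟩
        obtain ⟨fstar, hfstarmem, hfstarmax⟩ := Finset.exists_max_image _ pa hne
        obtain ⟨hfstarH, hfstara⟩ := Finset.mem_filter.mp hfstarmem
        have hfstarT : fstar ∈ T := by
          refine Finset.mem_filter.mpr ⟨hfstarH, fun f hf hfa => ?_⟩
          exact hfstarmax f (Finset.mem_filter.mpr ⟨hf, by rw [hfa, hfstara]⟩)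
        have hne' : fstar ≠ e := fun h => heT (h ▸ hfstarT)
        have hlt : pa e < pa fstar := by
          have h1 := hfstarmax e (Finset.mem_filter.mpr ⟨heH, rfl⟩)
          rcases Nat.lt_or_ge (pa e) (pa fstar) with h | h
          · exact h
          · exact absurd (hia e heH fstar hfstarH hfstara (by omega)) hne'
        exact ⟨fstar, hfstarT, Or.inl ⟨hfstara, hlt⟩⟩

/-- Galvin-style induction: if each list is bigger than the out-degree in the
orientation given by `pa`/`pb`, a proper list coloring exists. -/
lemma coloring (a b : E → V) (pa pb : E → ℕ)
    (hia : ∀ e f : E, a f = a e → pa f = pa e → f = e)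
    (hib : ∀ e f : E, b f = b e → pb f = pb e → f = e) :
    ∀ (n : ℕ) (F : Finset E) (L : E → Finset ℕ),
    (F.sum fun e => (L e).card) ≤ n →
    (∀ e ∈ F, (F.filter fun f => a f = a e ∧ pa e < pa f).card +
              (F.filter fun f => b f = b e ∧ pb f < pb e).card < (L e).card) →
    ∃ c : E → ℕ, (∀ e ∈ F, c e ∈ L e) ∧
      ∀ e ∈ F, ∀ f ∈ F, e ≠ f → (a e = a f ∨ b e = b f) → c e ≠ c f := by
  classical
  intro n
  induction n with
  | zero =>
    intro F L hn hdeg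
    rcases F.eq_empty_or_nonempty with rfl | ⟨e₀, he₀⟩
    · exact ⟨fun _ => 0, by simp, by simp⟩
    · exfalso
      have h1 := hdeg e₀ he₀
      have h2 : (L e₀).card ≤ F.sum fun e => (L e).card :=
        Finset.single_le_sum (f := fun e => (L e).card) (fun e _ => Nat.zero_le _) he₀
      omega
  | succ n ih =>
    intro F L hn hdeg
    rcases F.eq_empty_or_nonempty with rfl | ⟨e₀, he₀⟩
    · exact ⟨fun _ => 0, by simp, by simp⟩
    have hLpos : 0 < (L e₀).card := by
      have := hdeg e₀ he₀; omega
    obtain ⟨α, hα⟩ := Finset.card_pos.mp hLpos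
    set H : Finset E := F.filter (fun e => α ∈ L e) with hHdef
    have hHF : H ⊆ F := Finset.filter_subset _ _
    obtain ⟨K, hKH, hKmatch, hKdom⟩ := stable_matching a b pa pb H.card H (le_refl _)
      (fun e _ f _ hab hp => hia e f hab hp)
      (fun e _ f _ hab hp => hib e f hab hp)
    have hKF : K ⊆ F := hKH.trans hHF
    have hKne : K.Nonempty := by
      by_cases he₀K : e₀ ∈ K
      · exact ⟨e₀, he₀K⟩
      · have he₀H : e₀ ∈ H := Finset.mem_filter.mpr ⟨he₀, hα⟩
        obtain ⟨f, hf, _⟩ := hKdom e₀ he₀H he₀K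
        exact ⟨f, hf⟩
    set F' : Finset E := F \ K with hF'def
    set L' : E → Finset ℕ := fun e => if α ∈ L e then (L e).erase α else L e with hL'def
    have hL'sub : ∀ e, L' e ⊆ L e := by
      intro e
      by_cases h : α ∈ L e <;> simp [hL'def, h, Finset.erase_subset]
    have hL'card : ∀ e, α ∈ L e → (L' e).card = (L e).card - 1 := by
      intro e h
      simp [hL'def, h, Finset.card_erase_of_mem]
    have hL'eq : ∀ e, α ∉ L e → L' e = L e := by
      intro e h
      simp [hL'def, h]
    have hαL' : ∀ e, α ∉ L' e := by
      intro e
      by_cases h : α ∈ L e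
      · simp [hL'def, h]
      · simp [hL'def, h]
    have hF'sub : F' ⊆ F := Finset.sdiff_subset
    -- measure decreases
    obtain ⟨k, hk⟩ := hKne
    have hkH : k ∈ H := hKH hk
    have hkL : 0 < (L k).card := Finset.card_pos.mpr ⟨α, (Finset.mem_filter.mp hkH).2⟩
    have hmeas : (F'.sum fun e => (L' e).card) ≤ n := by
      have h1 : (F'.sum fun e => (L' e).card) ≤ (F'.sum fun e => (L e).card) :=
        Finset.sum_le_sum fun e _ => Finset.card_le_card (hL'sub e)
      have h2 : F' ⊆ F.erase k := by
        intro f hf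
        rw [Finset.mem_erase]
        rw [hF'def, Finset.mem_sdiff] at hf
        exact ⟨fun h => hf.2 (h ▸ hk), hf.1⟩
      have h3 : (F'.sum fun e => (L e).card) ≤ ((F.erase k).sum fun e => (L e).card) :=
        Finset.sum_le_sum_of_subset h2
      have h4 : ((F.erase k).sum fun e => (L e).card) + (L k).card
          = F.sum fun e => (L e).card :=
        Finset.sum_erase_add _ _ (hKF hk)
      omega
    -- invariant for recursive call
    have hdeg' : ∀ e ∈ F', (F'.filter fun f => a f = a e ∧ pa e < pa f).card +
        (F'.filter fun f => b f = b e ∧ pb f < pb e).card < (L' e).card := by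
      intro e heF'
      have heF : e ∈ F := hF'sub heF'
      have heK : e ∉ K := (Finset.mem_sdiff.mp heF').2
      have hosub : (F'.filter fun f => a f = a e ∧ pa e < pa f)
          ⊆ (F.filter fun f => a f = a e ∧ pa e < pa f) :=
        Finset.filter_subset_filter _ hF'sub
      have husub : (F'.filter fun f => b f = b e ∧ pb f < pb e)
          ⊆ (F.filter fun f => b f = b e ∧ pb f < pb e) :=
        Finset.filter_subset_filter _ hF'sub
      by_cases heH : e ∈ H
      · -- list lost α but out-degree dropped
        obtain ⟨f, hfK, hfd⟩ := hKdom e heH heK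
        have hfF : f ∈ F := hKF hfK
        have hfF' : f ∉ F' := fun h => (Finset.mem_sdiff.mp h).2 hfK
        have hcard : (F'.filter fun f => a f = a e ∧ pa e < pa f).card +
            (F'.filter fun f => b f = b e ∧ pb f < pb e).card + 1 ≤
            (F.filter fun f => a f = a e ∧ pa e < pa f).card +
            (F.filter fun f => b f = b e ∧ pb f < pb e).card := by
          rcases hfd with ⟨hfa, hflt⟩ | ⟨hfb, hflt⟩
          · have hfmem : f ∈ F.filter fun f => a f = a e ∧ pa e < pa f :=
              Finset.mem_filter.mpr ⟨hfF, hfa, hflt⟩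
            have h5 : (F'.filter fun f => a f = a e ∧ pa e < pa f)
                ⊆ (F.filter fun f => a f = a e ∧ pa e < pa f).erase f := by
              intro g hg
              refine Finset.mem_erase.mpr ⟨?_, hosub hg⟩
              rintro rfl
              exact hfF' (Finset.mem_of_mem_filter _ hg)
            have h6 := Finset.card_erase_of_mem hfmem
            have h7 := Finset.card_le_card h5
            have h8 := Finset.card_le_card husub
            have h9 : 0 < (F.filter fun f => a f = a e ∧ pa e < pa f).card :=
              Finset.card_pos.mpr ⟨f, hfmem⟩
            omega
          · have hfmem : f ∈ F.filter fun f => b f = b e ∧ pb f < pb e :=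
              Finset.mem_filter.mpr ⟨hfF, hfb, hflt⟩
            have h5 : (F'.filter fun f => b f = b e ∧ pb f < pb e)
                ⊆ (F.filter fun f => b f = b e ∧ pb f < pb e).erase f := by
              intro g hg
              refine Finset.mem_erase.mpr ⟨?_, husub hg⟩
              rintro rfl
              exact hfF' (Finset.mem_of_mem_filter _ hg)
            have h6 := Finset.card_erase_of_mem hfmem
            have h7 := Finset.card_le_card h5
            have h8 := Finset.card_le_card hosub
            have h9 : 0 < (F.filter fun f => b f = b e ∧ pb f < pb e).card :=
              Finset.card_pos.mpr ⟨f, hfmem⟩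
            omega
        have hαe : α ∈ L e := (Finset.mem_filter.mp heH).2
        have h10 := hL'card e hαe
        have h11 := hdeg e heF
        omega
      · have hαe : α ∉ L e := fun h => heH (Finset.mem_filter.mpr ⟨heF, h⟩)
        rw [hL'eq e hαe]
        have h1 := Finset.card_le_card hosub
        have h2 := Finset.card_le_card husub
        have h3 := hdeg e heF
        omega
    obtain ⟨c', hc'mem, hc'conf⟩ := ih F' L' hmeas hdeg'
    refine ⟨fun e => if e ∈ K then α else c' e, ?_, ?_⟩
    · intro e heF
      by_cases heK : e ∈ K
      · simp only [heK, if_true]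
        exact (Finset.mem_filter.mp (hKH heK)).2
      · simp only [heK, if_false]
        exact hL'sub e (hc'mem e (Finset.mem_sdiff.mpr ⟨heF, heK⟩))
    · intro e heF f hfF hef hshare
      by_cases heK : e ∈ K <;> by_cases hfK : f ∈ K
      · exfalso
        rcases hshare with h | h
        · exact (hKmatch e heK f hfK hef).1 h
        · exact (hKmatch e heK f hfK hef).2 h
      · simp only [heK, hfK, if_true, if_false]
        intro h
        have hfF' : f ∈ F' := Finset.mem_sdiff.mpr ⟨hfF, hfK⟩
        exact hαL' f (h ▸ hc'mem f hfF')
      · simp only [heK, hfK, if_true, if_false]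
        intro h
        have heF' : e ∈ F' := Finset.mem_sdiff.mpr ⟨heF, heK⟩
        exact hαL' e (h.symm ▸ hc'mem e heF')
      · simp only [heK, hfK, if_false]
        exact hc'conf e (Finset.mem_sdiff.mpr ⟨heF, heK⟩)
          f (Finset.mem_sdiff.mpr ⟨hfF, hfK⟩) hef hshare


end BKW

/-- Theorem of Borodin, Kostochka, and Woodall: a bipartite multigraph (given by an
edge type `E` with an endpoint map into `Sym2 V`, every edge having one endpoint in
each side) is edge-`f`-choosable, where `f(e) = max{d(x), d(y)}` for `e = xy`.
Here `d(x)` is the number of edges incident to `x`. -/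
theorem stmt18 {V E : Type*} [Fintype V] [Fintype E] [DecidableEq V]
    (ends : E → Sym2 V)
    (hbip : ∃ S : Set V, ∀ e : E, ∃ x ∈ S, ∃ y ∉ S, ends e = s(x, y))
    (L : E → Finset ℕ)
    (hL : ∀ (e : E) (x y : V), ends e = s(x, y) →
      max (Finset.univ.filter (fun e' => x ∈ ends e')).card
          (Finset.univ.filter (fun e' => y ∈ ends e')).card ≤ (L e).card) :
    ∃ c : E → ℕ, (∀ e, c e ∈ L e) ∧
      ∀ e f : E, e ≠ f → (∃ x, x ∈ ends e ∧ x ∈ ends f) → c e ≠ c f := by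
  classical
  obtain ⟨S, hS⟩ := hbip
  have hchoose : ∀ e : E, ∃ p : V × V, p.1 ∈ S ∧ p.2 ∉ S ∧ ends e = s(p.1, p.2) := by
    intro e
    obtain ⟨x, hx, y, hy, hxy⟩ := hS e
    exact ⟨(x, y), hx, hy, hxy⟩
  choose p hp1 hp2 hp3 using hchoose
  set a : E → V := fun e => (p e).1 with hadef
  set b : E → V := fun e => (p e).2 with hbdef
  have hab : ∀ e f : E, a e ≠ b f := by
    intro e f h
    have hbf : b f ∈ S := h ▸ hp1 e
    exact hp2 f hbf
  have hmem : ∀ (e : E) (x : V), x ∈ ends e ↔ x = a e ∨ x = b e := by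
    intro e x
    rw [hp3 e, Sym2.mem_iff]
  -- degree identification
  have hdegA : ∀ e : E, (Finset.univ.filter (fun e' => a e ∈ ends e')).card
      = BKW.dd a Finset.univ (a e) := by
    intro e
    unfold BKW.dd
    congr 1
    apply Finset.filter_congr
    intro f _
    rw [hmem f (a e)]
    constructor
    · rintro (h | h)
      · exact h.symm
      · exact absurd h (hab e f)
    · intro h; exact Or.inl h.symm
  have hdegB : ∀ e : E, (Finset.univ.filter (fun e' => b e ∈ ends e')).card
      = BKW.dd b Finset.univ (b e) := by
    intro e
    unfold BKW.dd
    congr 1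
    apply Finset.filter_congr
    intro f _
    rw [hmem f (b e)]
    constructor
    · rintro (h | h)
      · exact absurd h.symm (hab f e)
      · exact h.symm
    · intro h; exact Or.inr h.symm
  obtain ⟨pa, pb, hia, hib, hcond⟩ := BKW.exists_orders a b (Finset.univ.card)
    Finset.univ le_rfl
  have hdeg : ∀ e ∈ (Finset.univ : Finset E),
      ((Finset.univ : Finset E).filter fun f => a f = a e ∧ pa e < pa f).card +
      ((Finset.univ : Finset E).filter fun f => b f = b e ∧ pb f < pb e).card
      < (L e).card := by
    intro e _
    have h1 := hcond e (Finset.mem_univ e)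
    have h2 := hL e (a e) (b e) (hp3 e)
    rw [hdegA e, hdegB e] at h2
    omega
  obtain ⟨c, hcmem, hcconf⟩ := BKW.coloring a b pa pb
    (fun e f h1 h2 => hia e (Finset.mem_univ e) f (Finset.mem_univ f) h1 h2)
    (fun e f h1 h2 => hib e (Finset.mem_univ e) f (Finset.mem_univ f) h1 h2)
    ((Finset.univ : Finset E).sum fun e => (L e).card) Finset.univ L le_rfl hdeg
  refine ⟨c, fun e => hcmem e (Finset.mem_univ e), ?_⟩
  intro e f hef ⟨x, hxe, hxf⟩
  refine hcconf e (Finset.mem_univ e) f (Finset.mem_univ f) hef ?_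
  rw [hmem e x] at hxe
  rw [hmem f x] at hxf
  rcases hxe with rfl | rfl <;> rcases hxf with h | h
  · exact Or.inl h
  · exact absurd h (hab e f)
  · exact absurd h.symm (hab f e)
  · exact Or.inr h
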